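/- Let m, n be positive integers, A ∈ ℝ^{m×n}, b ∈ ℝ^m, and let L be a natural number with 0 < L < m. Suppose A satisfies the 1-Absolute Range Property of order L for some ψ ∈ (0,1). Then for all x, y ∈ ℝ^n: ‖|Ax| − |Ay|‖₁ ≤ ((1+ψ)/(1−ψ)) · ( ‖|Ax| − b‖₁ − ‖|Ay| − b‖₁ + 2·σ¹_L(y) ). -/

import Mathlib

open Finset

/-- `sigmaL L v` : the minimum over subsets `T` of cardinality `L` of the sum of `|v i|`
over the complement of `T`, i.e. the sum of all but the `L` largest entries of `|v|`. -/
noncomputable def sigmaL {m : ℕ} (L : ℕ) (v : Fin m → ℝ) : ℝ :=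
  ⨅ T : {T : Finset (Fin m) // T.card = L}, ∑ i ∈ (T : Finset (Fin m))ᶜ, |v i|

theorem stmt_1 (m n : ℕ) (hm : 0 < m) (hn : 0 < n)
    (A : Fin m → Fin n → ℝ) (b : Fin m → ℝ)
    (L : ℕ) (hL0 : 0 < L) (hLm : L < m)
    (ψ : ℝ) (hψ0 : 0 < ψ) (hψ1 : ψ < 1)
    (hARP : ∀ (x y : Fin n → ℝ) (T : Finset (Fin m)), T.card ≤ L →
      ∑ i ∈ T, |abs (∑ j, A i j * x j) - abs (∑ j, A i j * y j)| ≤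
        ψ * ∑ i ∈ Tᶜ, |abs (∑ j, A i j * x j) - abs (∑ j, A i j * y j)|) :
    ∀ x y : Fin n → ℝ,
      ∑ i, |abs (∑ j, A i j * x j) - abs (∑ j, A i j * y j)| ≤
        ((1 + ψ) / (1 - ψ)) *
          ((∑ i, |abs (∑ j, A i j * x j) - b i|) - (∑ i, |abs (∑ j, A i j * y j) - b i|)
            + 2 * sigmaL L (fun i => abs (∑ j, A i j * y j) - b i)) := by
  intro x y
  set f : Fin m → ℝ := fun i => |∑ j, A i j * x j| with hf
  set g : Fin m → ℝ := fun i => |∑ j, A i j * y j| with hg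
  have hne : Nonempty {T : Finset (Fin m) // T.card = L} := by
    obtain ⟨t, _, ht⟩ := Finset.exists_subset_card_eq (s := (univ : Finset (Fin m))) (n := L)
      (by simpa using hLm.le)
    exact ⟨⟨t, ht⟩⟩
  obtain ⟨T0, hT0⟩ := Finite.exists_min
    (fun T : {T : Finset (Fin m) // T.card = L} =>
      ∑ i ∈ (T : Finset (Fin m))ᶜ, |g i - b i|)
  have hσ : ∑ i ∈ (T0 : Finset (Fin m))ᶜ, |g i - b i|
      ≤ sigmaL L (fun i => g i - b i) := le_ciInf hT0
  set T : Finset (Fin m) := (T0 : Finset (Fin m)) with hT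
  have hARP' := hARP x y T (le_of_eq T0.2)
  set S1 : ℝ := ∑ i ∈ T, |f i - g i| with hS1
  set S2 : ℝ := ∑ i ∈ Tᶜ, |f i - g i| with hS2
  have htot : ∑ i, |f i - g i| = S1 + S2 := (Finset.sum_add_sum_compl T _).symm
  have hkey : S2 - S1 ≤ (∑ i, |f i - b i|) - (∑ i, |g i - b i|)
      + 2 * sigmaL L (fun i => g i - b i) := by
    have hsplit1 : ∑ i, |f i - b i| = (∑ i ∈ T, |f i - b i|) + ∑ i ∈ Tᶜ, |f i - b i| :=
      (Finset.sum_add_sum_compl T _).symm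
    have hsplit2 : ∑ i, |g i - b i| = (∑ i ∈ T, |g i - b i|) + ∑ i ∈ Tᶜ, |g i - b i| :=
      (Finset.sum_add_sum_compl T _).symm
    have hT1 : ∑ i ∈ T, (|g i - b i| - |f i - b i|) ≤ S1 := by
      apply Finset.sum_le_sum
      intro i _
      have := abs_sub_abs_le_abs_sub (g i - b i) (f i - b i)
      have h2 : |g i - b i - (f i - b i)| = |f i - g i| := by
        rw [abs_sub_comm]; ring_nf
      linarith [this, h2.le, h2.ge]
    have hT2 : ∑ i ∈ Tᶜ, (|f i - g i| - |g i - b i|) ≤ ∑ i ∈ Tᶜ, |f i - b i| := by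
      apply Finset.sum_le_sum
      intro i _
      have h3 := abs_sub_le (f i) (b i) (g i)
      have h4 : |b i - g i| = |g i - b i| := abs_sub_comm _ _
      linarith
    rw [Finset.sum_sub_distrib] at hT1 hT2
    linarith [hσ, hsplit1, hsplit2]
  have h1ψ : 0 < 1 - ψ := by linarith
  have hS2R : (1 - ψ) * S2 ≤ (∑ i, |f i - b i|) - (∑ i, |g i - b i|)
      + 2 * sigmaL L (fun i => g i - b i) := by nlinarith [hARP', hkey]
  rw [htot]
  rw [div_mul_eq_mul_div, le_div_iff₀ h1ψ]
  nlinarith [hARP', hS2R, hψ0.le]
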